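/- arXiv:2310.08693 — 3 statements merged into one kernel-verified Lean document; each statement's English description precedes it below -/
import Mathlib

section
/- Let θ be a partial action of an inverse semigroupoid S on a set X. If (s,t) is a composable pair, then θ_s(X_{s*} ∩ X_t) = X_s ∩ X_{st}. -/
structure InvSgpd (S : Type*) (O : Type*) where
  d : S → O
  c : S → O
  mul : S → S → S
  d_mul : ∀ s t, d s = c t → d (mul s t) = d t
  c_mul : ∀ s t, d s = c t → c (mul s t) = c s
  assoc : ∀ p s t, d p = c s → d s = c t → mul (mul p s) t = mul p (mul s t)
  inv : S → S
  comp_inv : ∀ s, d s = c (inv s)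
  inv_comp : ∀ s, d (inv s) = c s
  mul_inv_mul : ∀ s, mul (mul s (inv s)) s = s
  inv_mul_inv : ∀ s, mul (mul (inv s) s) (inv s) = inv s
  inv_unique : ∀ s t, d s = c t → d t = c s →
    mul (mul s t) s = s → mul (mul t s) t = t → t = inv s

namespace InvSgpd
variable {S O : Type*} (G : InvSgpd S O)
def Composable (s t : S) : Prop := G.d s = G.c t
def Idem (e : S) : Prop := G.Composable e e ∧ G.mul e e = e
def le (s t : S) : Prop :=
  G.d s = G.d t ∧ G.c s = G.c t ∧ s = G.mul t (G.mul (G.inv s) s)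
end InvSgpd

namespace InvSgpd
variable {S O : Type*} (G : InvSgpd S O)

lemma d_inv (s : S) : G.d (G.inv s) = G.c s := G.inv_comp s
lemma c_inv (s : S) : G.c (G.inv s) = G.d s := (G.comp_inv s).symm

lemma inv_inv (s : S) : G.inv (G.inv s) = s :=
  (G.inv_unique (G.inv s) s (G.inv_comp s) (G.comp_inv s) (G.inv_mul_inv s)
    (G.mul_inv_mul s)).symm

lemma idem_mul_inv (s : S) : G.Idem (G.mul s (G.inv s)) := by
  have hc : G.d s = G.c (G.inv s) := G.comp_inv s
  refine ⟨?_, ?_⟩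
  · show G.d _ = G.c _
    rw [G.d_mul _ _ hc, G.c_mul _ _ hc, G.d_inv]
  · have h1 : G.d (G.mul s (G.inv s)) = G.c s := by rw [G.d_mul _ _ hc, G.d_inv]
    rw [← G.assoc (G.mul s (G.inv s)) s (G.inv s) h1 hc, G.mul_inv_mul]

lemma idem_inv_mul (s : S) : G.Idem (G.mul (G.inv s) s) := by
  have := G.idem_mul_inv (G.inv s)
  rwa [G.inv_inv] at this

lemma inv_of_idem {e : S} (he : G.Idem e) : G.inv e = e :=
  (G.inv_unique e e he.1 he.1 (by rw [he.2, he.2]) (by rw [he.2, he.2])).symm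

end InvSgpd

/-- In a semigroup with an inverse operation with unique inverses, products of
idempotents are idempotent. -/
theorem idem_mul_idem_of_inv {M : Type*} [Semigroup M] (i : M → M)
    (h1 : ∀ a, a * i a * a = a) (h2 : ∀ a, i a * a * i a = i a)
    (h3 : ∀ a b, a * b * a = a → b * a * b = b → b = i a)
    {e f : M} (he : e * e = e) (hf : f * f = f) : (e * f) * (e * f) = e * f := by
  have he' : ∀ y, e * (e * y) = e * y := fun y => by rw [← mul_assoc, he]
  have hf' : ∀ y, f * (f * y) = f * y := fun y => by rw [← mul_assoc, hf]
  set x := i (e * f) with hxdef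
  have hx1 : (e * f) * x * (e * f) = e * f := h1 _
  have hx2 : x * (e * f) * x = x := h2 _
  have hx1' : e * (f * (x * (e * f))) = e * f := by
    simpa [mul_assoc] using hx1
  have hx2e : ∀ y, x * (e * (f * (x * y))) = x * y := fun y => by
    have := congrArg (· * y) hx2
    simpa [mul_assoc] using this
  have key : f * (x * e) = x := by
    have c1 : (e * f) * (f * (x * e)) * (e * f) = e * f := by
      calc (e * f) * (f * (x * e)) * (e * f)
          = e * (f * (f * (x * (e * (e * f))))) := by simp [mul_assoc]
        _ = e * (f * (x * (e * f))) := by rw [hf', he']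
        _ = e * f := hx1'
    have c2 : (f * (x * e)) * (e * f) * (f * (x * e)) = f * (x * e) := by
      calc (f * (x * e)) * (e * f) * (f * (x * e))
          = f * (x * (e * (e * (f * (f * (x * e)))))) := by simp [mul_assoc]
        _ = f * (x * (e * (f * (x * e)))) := by rw [he', hf']
        _ = f * (x * e) := by rw [hx2e]
    exact h3 (e * f) (f * (x * e)) c1 c2
  have hxx : x * x = x := by
    calc x * x = (f * (x * e)) * (f * (x * e)) := by rw [key]
      _ = f * (x * (e * (f * (x * e)))) := by simp [mul_assoc]
      _ = f * (x * e) := by rw [hx2e]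
      _ = x := key
  have hxix : x = i x := h3 x x (by rw [hxx, hxx]) (by rw [hxx, hxx])
  have hefix : e * f = i x := h3 x (e * f) hx2 hx1
  have hef : e * f = x := by rw [hefix, ← hxix]
  rw [hef]; exact hxx

/-- In a semigroup with an inverse operation with unique inverses, idempotents
commute. -/
theorem idem_mul_comm_of_inv {M : Type*} [Semigroup M] (i : M → M)
    (h1 : ∀ a, a * i a * a = a) (h2 : ∀ a, i a * a * i a = i a)
    (h3 : ∀ a b, a * b * a = a → b * a * b = b → b = i a)
    {e f : M} (he : e * e = e) (hf : f * f = f) : e * f = f * e := by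
  have he' : ∀ y, e * (e * y) = e * y := fun y => by rw [← mul_assoc, he]
  have hf' : ∀ y, f * (f * y) = f * y := fun y => by rw [← mul_assoc, hf]
  have hef : (e * f) * (e * f) = e * f := idem_mul_idem_of_inv i h1 h2 h3 he hf
  have hfe : (f * e) * (f * e) = f * e := idem_mul_idem_of_inv i h1 h2 h3 hf he
  have c1 : (e * f) * (f * e) * (e * f) = e * f := by
    calc (e * f) * (f * e) * (e * f)
        = e * (f * (f * (e * (e * f)))) := by simp [mul_assoc]
      _ = e * (f * (e * f)) := by rw [hf', he']
      _ = (e * f) * (e * f) := by simp [mul_assoc]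
      _ = e * f := hef
  have c2 : (f * e) * (e * f) * (f * e) = f * e := by
    calc (f * e) * (e * f) * (f * e)
        = f * (e * (e * (f * (f * e)))) := by simp [mul_assoc]
      _ = f * (e * (f * e)) := by rw [he', hf']
      _ = (f * e) * (f * e) := by simp [mul_assoc]
      _ = f * e := hfe
  have cfe : f * e = i (e * f) := h3 (e * f) (f * e) c1 c2
  have cef : e * f = i (e * f) := h3 (e * f) (e * f) (by rw [hef, hef]) (by rw [hef, hef])
  rw [cfe, ← cef]

namespace InvSgpd
variable {S O : Type*} (G : InvSgpd S O)

/-- Elements with both source and target equal to `o`. -/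
def Loc (o : O) : Type _ := {s : S // G.d s = o ∧ G.c s = o}

instance locSemigroup (o : O) : Semigroup (G.Loc o) where
  mul a b := ⟨G.mul a.1 b.1, by
    have hc : G.d a.1 = G.c b.1 := by rw [a.2.1, b.2.2]
    rw [G.d_mul _ _ hc, G.c_mul _ _ hc]
    exact ⟨b.2.1, a.2.2⟩⟩
  mul_assoc a b c := Subtype.ext
    (G.assoc a.1 b.1 c.1 (by rw [a.2.1, b.2.2]) (by rw [b.2.1, c.2.2]))

def locInv (o : O) (a : G.Loc o) : G.Loc o :=
  ⟨G.inv a.1, by rw [G.d_inv, G.c_inv]; exact ⟨a.2.2, a.2.1⟩⟩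

lemma idem_comm {e f : S} (he : G.Idem e) (hf : G.Idem f) (hd : G.d e = G.d f) :
    G.mul e f = G.mul f e := by
  set o := G.d e with ho
  let E : G.Loc o := ⟨e, ho.symm, by rw [← he.1]⟩
  let F : G.Loc o := ⟨f, by rw [← hd], by rw [← hf.1, ← hd]⟩
  have h1 : ∀ a : G.Loc o, a * G.locInv o a * a = a := fun a =>
    Subtype.ext (G.mul_inv_mul a.1)
  have h2 : ∀ a : G.Loc o, G.locInv o a * a * G.locInv o a = G.locInv o a := fun a =>
    Subtype.ext (G.inv_mul_inv a.1)
  have h3 : ∀ a b : G.Loc o, a * b * a = a → b * a * b = b → b = G.locInv o a := by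
    intro a b hab hba
    exact Subtype.ext (G.inv_unique a.1 b.1 (by rw [a.2.1, b.2.2]) (by rw [b.2.1, a.2.2])
      (congrArg Subtype.val hab) (congrArg Subtype.val hba))
  have hE : (E : G.Loc o) * E = E := Subtype.ext he.2
  have hF : (F : G.Loc o) * F = F := Subtype.ext hf.2
  have := idem_mul_comm_of_inv (G.locInv o) h1 h2 h3 hE hF
  exact congrArg Subtype.val this

end InvSgpd

namespace InvSgpd
variable {S O : Type*} (G : InvSgpd S O)

lemma sandwich {s t : S} (h : G.d s = G.c t) :
    G.mul (G.mul (G.mul s t) (G.mul (G.inv t) (G.inv s))) (G.mul s t) = G.mul s t := by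
  have ic : G.mul (G.mul t (G.inv t)) (G.mul (G.inv s) s)
      = G.mul (G.mul (G.inv s) s) (G.mul t (G.inv t)) := by
    refine G.idem_comm (G.idem_mul_inv t) (G.idem_inv_mul s) ?_
    simp (config := { maxDischargeDepth := 8 }) only [G.d_mul, G.c_mul, G.d_inv, G.c_inv, h]
  calc G.mul (G.mul (G.mul s t) (G.mul (G.inv t) (G.inv s))) (G.mul s t)
      = G.mul (G.mul s t) (G.mul (G.mul (G.inv t) (G.inv s)) (G.mul s t)) := by
        refine G.assoc _ _ _ ?_ ?_ <;> simp (config := { maxDischargeDepth := 8 }) only [G.d_mul, G.c_mul, G.d_inv, G.c_inv, h]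
    _ = G.mul (G.mul s t) (G.mul (G.inv t) (G.mul (G.inv s) (G.mul s t))) := by
        rw [G.assoc (G.inv t) (G.inv s) (G.mul s t)] <;>
          simp (config := { maxDischargeDepth := 8 }) only [G.d_mul, G.c_mul, G.d_inv, G.c_inv, h]
    _ = G.mul (G.mul s t) (G.mul (G.inv t) (G.mul (G.mul (G.inv s) s) t)) := by
        rw [G.assoc (G.inv s) s t] <;>
          simp (config := { maxDischargeDepth := 8 }) only [G.d_mul, G.c_mul, G.d_inv, G.c_inv, h]
    _ = G.mul s (G.mul t (G.mul (G.inv t) (G.mul (G.mul (G.inv s) s) t))) := by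
        refine G.assoc _ _ _ ?_ ?_ <;> simp (config := { maxDischargeDepth := 8 }) only [G.d_mul, G.c_mul, G.d_inv, G.c_inv, h]
    _ = G.mul s (G.mul (G.mul t (G.inv t)) (G.mul (G.mul (G.inv s) s) t)) := by
        rw [G.assoc t (G.inv t) (G.mul (G.mul (G.inv s) s) t)] <;>
          simp (config := { maxDischargeDepth := 8 }) only [G.d_mul, G.c_mul, G.d_inv, G.c_inv, h]
    _ = G.mul s (G.mul (G.mul (G.mul t (G.inv t)) (G.mul (G.inv s) s)) t) := by
        rw [G.assoc (G.mul t (G.inv t)) (G.mul (G.inv s) s) t] <;>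
          simp (config := { maxDischargeDepth := 8 }) only [G.d_mul, G.c_mul, G.d_inv, G.c_inv, h]
    _ = G.mul s (G.mul (G.mul (G.mul (G.inv s) s) (G.mul t (G.inv t))) t) := by rw [ic]
    _ = G.mul s (G.mul (G.mul (G.inv s) s) (G.mul (G.mul t (G.inv t)) t)) := by
        rw [G.assoc (G.mul (G.inv s) s) (G.mul t (G.inv t)) t] <;>
          simp (config := { maxDischargeDepth := 8 }) only [G.d_mul, G.c_mul, G.d_inv, G.c_inv, h]
    _ = G.mul s (G.mul (G.mul (G.inv s) s) t) := by rw [G.mul_inv_mul t]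
    _ = G.mul s (G.mul (G.inv s) (G.mul s t)) := by
        rw [G.assoc (G.inv s) s t] <;>
          simp (config := { maxDischargeDepth := 8 }) only [G.d_mul, G.c_mul, G.d_inv, G.c_inv, h]
    _ = G.mul (G.mul s (G.inv s)) (G.mul s t) := by
        rw [G.assoc s (G.inv s) (G.mul s t)] <;>
          simp (config := { maxDischargeDepth := 8 }) only [G.d_mul, G.c_mul, G.d_inv, G.c_inv, h]
    _ = G.mul (G.mul (G.mul s (G.inv s)) s) t := by
        rw [G.assoc (G.mul s (G.inv s)) s t] <;>
          simp (config := { maxDischargeDepth := 8 }) only [G.d_mul, G.c_mul, G.d_inv, G.c_inv, h]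
    _ = G.mul s t := by rw [G.mul_inv_mul s]

lemma inv_mul' {s t : S} (h : G.d s = G.c t) :
    G.inv (G.mul s t) = G.mul (G.inv t) (G.inv s) := by
  have hts : G.d (G.inv t) = G.c (G.inv s) := by rw [G.d_inv, G.c_inv, h]
  refine (G.inv_unique (G.mul s t) (G.mul (G.inv t) (G.inv s)) ?_ ?_ ?_ ?_).symm
  · simp (config := { maxDischargeDepth := 8 }) only [G.d_mul, G.c_mul, G.d_inv, G.c_inv, h]
  · simp (config := { maxDischargeDepth := 8 }) only [G.d_mul, G.c_mul, G.d_inv, G.c_inv, h]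
  · exact G.sandwich h
  · have := G.sandwich hts
    rwa [G.inv_inv, G.inv_inv] at this

end InvSgpd

/-- A partial action of an inverse semigroupoid `G` on a set (type) `X`:
`dom s` plays the role of `X_s` and `act s` the role of `θ_s : X_{s*} → X_s`
(as a total map whose values are only relevant on `dom (G.inv s)`). -/
structure PAction {S O : Type*} (G : InvSgpd S O) (X : Type*) where
  dom : S → Set X
  act : S → X → X
  maps : ∀ s, ∀ x ∈ dom (G.inv s), act s x ∈ dom s
  /-- (P1) `θ_e = id_{X_e}` for idempotents. -/
  idem_id : ∀ e, G.Idem e → ∀ x ∈ dom e, act e x = x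
  /-- (P1) every point lies in some `X_e` with `e` idempotent. -/
  cover : ∀ x : X, ∃ e, G.Idem e ∧ x ∈ dom e
  /-- (P2) `X_s ⊆ X_{ss*}`. -/
  dom_mono : ∀ s, dom s ⊆ dom (G.mul s (G.inv s))
  /-- (P3) `θ_t⁻¹(X_t ∩ X_{s*}) = X_{(st)*} ∩ X_{t*}` for composable `(s,t)`. -/
  preimage_eq : ∀ s t, G.Composable s t →
    {x | x ∈ dom (G.inv t) ∧ act t x ∈ dom t ∩ dom (G.inv s)}
      = dom (G.inv (G.mul s t)) ∩ dom (G.inv t)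
  /-- (P3) `θ_s (θ_t x) = θ_{st} x` on `X_{(st)*} ∩ X_{t*}`. -/
  mul_act : ∀ s t, G.Composable s t →
    ∀ x ∈ dom (G.inv (G.mul s t)) ∩ dom (G.inv t),
      act s (act t x) = act (G.mul s t) x

namespace PAction
variable {S O X : Type*} {G : InvSgpd S O}

/-- A partial action is global when `X_s = X_{ss*}` for every `s`. -/
def IsGlobal (θ : PAction G X) : Prop := ∀ s, θ.dom s = θ.dom (G.mul s (G.inv s))

end PAction

namespace PAction
variable {S O X : Type*} {G : InvSgpd S O}

lemma act_inv_mem (θ : PAction G X) {s : S} {x : X} (hx : x ∈ θ.dom s) :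
    θ.act (G.inv s) x ∈ θ.dom (G.inv s) :=
  θ.maps (G.inv s) x (by rwa [G.inv_inv])

lemma act_act_inv (θ : PAction G X) {s : S} {x : X} (hx : x ∈ θ.dom s) :
    θ.act s (θ.act (G.inv s) x) = x := by
  have hss : G.Idem (G.mul s (G.inv s)) := G.idem_mul_inv s
  have hmem : x ∈ θ.dom (G.mul s (G.inv s)) := θ.dom_mono s hx
  have h1 : x ∈ θ.dom (G.inv (G.mul s (G.inv s))) := by
    rwa [G.inv_of_idem hss]
  have h2 : x ∈ θ.dom (G.inv (G.inv s)) := by rwa [G.inv_inv]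
  have := θ.mul_act s (G.inv s) (G.comp_inv s) x ⟨h1, h2⟩
  rw [this]
  exact θ.idem_id _ hss x hmem

end PAction

/-- For a composable pair `(s,t)`, `θ_s(X_{s*} ∩ X_t) = X_s ∩ X_{st}`. -/
theorem act_image_inter {S O X : Type*} (G : InvSgpd S O) (θ : PAction G X)
    (s t : S) (h : G.Composable s t) :
    θ.act s '' (θ.dom (G.inv s) ∩ θ.dom t) = θ.dom s ∩ θ.dom (G.mul s t) := by
  have h' : G.d s = G.c t := h
  apply Set.Subset.antisymm
  · rintro y ⟨x, ⟨hxs, hxt⟩, rfl⟩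
    refine ⟨θ.maps s x hxs, ?_⟩
    set z := θ.act (G.inv t) x with hz
    have hz1 : z ∈ θ.dom (G.inv t) := θ.act_inv_mem hxt
    have hz2 : θ.act t z = x := θ.act_act_inv hxt
    have hzmem : z ∈ θ.dom (G.inv (G.mul s t)) ∩ θ.dom (G.inv t) := by
      rw [← θ.preimage_eq s t h]
      exact ⟨hz1, by rw [hz2]; exact ⟨hxt, hxs⟩⟩
    have hacts : θ.act s x = θ.act (G.mul s t) z := by
      rw [← hz2]; exact θ.mul_act s t h z hzmem
    rw [hacts]
    exact θ.maps (G.mul s t) z hzmem.1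
  · rintro y ⟨hys, hyst⟩
    have hx1 : θ.act (G.inv s) y ∈ θ.dom (G.inv s) := θ.act_inv_mem hys
    have hcomp' : G.Composable (G.inv t) (G.inv s) := by
      show G.d (G.inv t) = G.c (G.inv s)
      rw [G.d_inv, G.c_inv, h']
    have hpre := θ.preimage_eq (G.inv t) (G.inv s) hcomp'
    have hinv : G.inv (G.mul (G.inv t) (G.inv s)) = G.mul s t := by
      rw [G.inv_mul' hcomp', G.inv_inv, G.inv_inv]
    have hy : y ∈ {x | x ∈ θ.dom (G.inv (G.inv s)) ∧
        θ.act (G.inv s) x ∈ θ.dom (G.inv s) ∩ θ.dom (G.inv (G.inv t))} := by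
      rw [hpre, hinv, G.inv_inv]
      exact ⟨hyst, hys⟩
    have hx2 : θ.act (G.inv s) y ∈ θ.dom t := by
      have := hy.2.2
      rwa [G.inv_inv] at this
    exact ⟨θ.act (G.inv s) y, ⟨hx1, hx2⟩, θ.act_act_inv hys⟩
end

section
/- Let S be an inverse semigroupoid, X a set, {X_s} a family of subsets of X and θ_s : X_{s*} → X_s a family of maps. The pair ({X_s},{θ_s}) is a partial action (satisfying axioms P1–P3) if and only if: (E1) each θ_s is a bijection with θ_s⁻¹ = θ_{s*}, and X = ∪_s X_s; (E2) for every composable pair (s,t), θ_{st} extends θ_s ∘ θ_t (where θ_s ∘ θ_t is defined on θ_t⁻¹(X_t ∩ X_{s*})); (E3) X_s ⊆ X_t whenever s ≤ t. -/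
namespace InvSgpdAux
open InvSgpd
variable {S O : Type*} (G : InvSgpd S O)

lemma d_inv (s : S) : G.d (G.inv s) = G.c s := G.inv_comp s
lemma c_inv (s : S) : G.c (G.inv s) = G.d s := (G.comp_inv s).symm

lemma inv_inv (s : S) : G.inv (G.inv s) = s :=
  (G.inv_unique (G.inv s) s (G.inv_comp s) (G.comp_inv s)
    (G.inv_mul_inv s) (G.mul_inv_mul s)).symm

lemma idem_inv {e : S} (he : G.Idem e) : G.inv e = e :=
  (G.inv_unique e e he.1 he.1 (by rw [he.2, he.2]) (by rw [he.2, he.2])).symm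

lemma idem_inv_mul (s : S) : G.Idem (G.mul (G.inv s) s) := by
  constructor
  · show G.d _ = G.c _
    rw [G.d_mul _ _ (G.inv_comp s), G.c_mul _ _ (G.inv_comp s), c_inv]
  · rw [← G.assoc (G.mul (G.inv s) s) (G.inv s) s
        (by rw [G.d_mul _ _ (G.inv_comp s), c_inv]) (G.inv_comp s), G.inv_mul_inv]

lemma idem_mul_inv (s : S) : G.Idem (G.mul s (G.inv s)) := by
  have := idem_inv_mul G (G.inv s)
  rwa [inv_inv] at this

end InvSgpdAux

namespace InvSgpdAux
variable {S O : Type*} (G : InvSgpd S O) (o : O)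

def Loop := {s : S // G.d s = o ∧ G.c s = o}

instance : Semigroup (Loop G o) where
  mul a b := ⟨G.mul a.1 b.1,
    by rw [G.d_mul _ _ (by rw [a.2.1, b.2.2]), b.2.1],
    by rw [G.c_mul _ _ (by rw [a.2.1, b.2.2]), a.2.2]⟩
  mul_assoc a b c := Subtype.ext
    (G.assoc a.1 b.1 c.1 (by rw [a.2.1, b.2.2]) (by rw [b.2.1, c.2.2]))

variable {G o}

def linv (a : Loop G o) : Loop G o :=
  ⟨G.inv a.1, by rw [d_inv, a.2.2], by rw [c_inv, a.2.1]⟩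

lemma loop_mul_val (a b : Loop G o) : (a * b).1 = G.mul a.1 b.1 := rfl

lemma loop_mim (a : Loop G o) : a * linv a * a = a :=
  Subtype.ext (G.mul_inv_mul a.1)

lemma loop_imi (a : Loop G o) : linv a * a * linv a = linv a :=
  Subtype.ext (G.inv_mul_inv a.1)

lemma loop_inv_unique (a b : Loop G o) (h1 : a * b * a = a) (h2 : b * a * b = b) :
    b = linv a :=
  Subtype.ext (G.inv_unique a.1 b.1 (by rw [a.2.1, b.2.2]) (by rw [b.2.1, a.2.2])
    (congrArg Subtype.val h1) (congrArg Subtype.val h2))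

lemma loop_idem_mul (e f : Loop G o) (he : e * e = e) (hf : f * f = f) :
    (e * f) * (e * f) = e * f := by
  set x := linv (e * f) with hxdef
  have he_r : ∀ z : Loop G o, e * (e * z) = e * z := fun z => by rw [← mul_assoc, he]
  have hf_r : ∀ z : Loop G o, f * (f * z) = f * z := fun z => by rw [← mul_assoc, hf]
  have hxa : e * (f * (x * (e * f))) = e * f := by
    simpa [mul_assoc] using loop_mim (e * f)
  have hax : x * (e * (f * x)) = x := by
    simpa [mul_assoc] using loop_imi (e * f)
  have hax_r : ∀ z : Loop G o, x * (e * (f * (x * z))) = x * z := fun z => by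
    rw [show x * (e * (f * (x * z))) = (x * (e * (f * x))) * z by simp [mul_assoc], hax]
  have hA : f * (x * e) = x := by
    rw [hxdef]
    apply loop_inv_unique
    · show (e * f) * (f * (x * e)) * (e * f) = e * f
      calc (e * f) * (f * (x * e)) * (e * f)
          = e * (f * (f * (x * (e * (e * f))))) := by simp [mul_assoc]
        _ = e * f := by rw [hf_r, he_r, hxa]
    · show (f * (x * e)) * (e * f) * (f * (x * e)) = f * (x * e)
      calc (f * (x * e)) * (e * f) * (f * (x * e))
          = f * (x * (e * (e * (f * (f * (x * e)))))) := by simp [mul_assoc]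
        _ = f * (x * e) := by rw [he_r, hf_r, hax_r]
  have hxx : x * x = x := by
    calc x * x = (f * (x * e)) * (f * (x * e)) := by rw [hA]
      _ = f * (x * (e * (f * (x * e)))) := by simp [mul_assoc]
      _ = f * (x * e) := by rw [hax_r]
      _ = x := hA
  have hEFx : e * f = x := by
    have h1 : e * f = linv x := by
      apply loop_inv_unique
      · show x * (e * f) * x = x
        calc x * (e * f) * x = x * (e * (f * x)) := by simp [mul_assoc]
          _ = x := hax
      · show (e * f) * x * (e * f) = e * f
        calc (e * f) * x * (e * f) = e * (f * (x * (e * f))) := by simp [mul_assoc]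
          _ = e * f := hxa
    have h2 : x = linv x := loop_inv_unique x x (by rw [hxx, hxx]) (by rw [hxx, hxx])
    rw [h1, ← h2]
  rw [hEFx]; exact hxx

lemma loop_idem_comm (e f : Loop G o) (he : e * e = e) (hf : f * f = f) :
    e * f = f * e := by
  have he_r : ∀ z : Loop G o, e * (e * z) = e * z := fun z => by rw [← mul_assoc, he]
  have hf_r : ∀ z : Loop G o, f * (f * z) = f * z := fun z => by rw [← mul_assoc, hf]
  have hef := loop_idem_mul e f he hf
  have hfe := loop_idem_mul f e hf he
  have hef_r : e * (f * (e * f)) = e * f := by simpa [mul_assoc] using hef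
  have hfe_r : f * (e * (f * e)) = f * e := by simpa [mul_assoc] using hfe
  have h1 : f * e = linv (e * f) := by
    apply loop_inv_unique
    · calc (e * f) * (f * e) * (e * f) = e * (f * (f * (e * (e * f)))) := by simp [mul_assoc]
        _ = e * (f * (e * f)) := by rw [hf_r, he_r]
        _ = e * f := hef_r
    · calc (f * e) * (e * f) * (f * e) = f * (e * (e * (f * (f * e)))) := by simp [mul_assoc]
        _ = f * (e * (f * e)) := by rw [he_r, hf_r]
        _ = f * e := hfe_r
  have h2 : e * f = linv (e * f) :=
    loop_inv_unique _ _ (by rw [hef, hef]) (by rw [hef, hef])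
  rw [h1, ← h2]

lemma idem_comm {e f : S} (he : G.Idem e) (hf : G.Idem f) (hdd : G.d e = G.d f) :
    G.mul e f = G.mul f e := by
  exact congrArg Subtype.val
    (loop_idem_comm (o := G.d e) ⟨e, rfl, (he.1).symm⟩
      ⟨f, hdd.symm, (hf.1).symm.trans hdd.symm⟩
      (Subtype.ext he.2) (Subtype.ext hf.2))

end InvSgpdAux

namespace InvSgpdAux
variable {S O : Type*} (G : InvSgpd S O)

lemma sandwich {s t : S} (h : G.Composable s t) :
    G.mul (G.mul (G.mul s t) (G.mul (G.inv t) (G.inv s))) (G.mul s t) = G.mul s t := by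
  have h' : G.d s = G.c t := h
  have h1 : G.d t = G.c (G.inv t) := G.comp_inv t
  have h2 : G.d (G.inv t) = G.c (G.inv s) := by rw [d_inv, c_inv]; exact h'.symm
  have h3 : G.d s = G.c (G.inv s) := G.comp_inv s
  have h4 : G.d (G.inv s) = G.c s := G.inv_comp s
  have dst : G.d (G.mul s t) = G.d t := G.d_mul s t h'
  have cst : G.c (G.mul s t) = G.c s := G.c_mul s t h'
  have de : G.d (G.mul t (G.inv t)) = G.c t := by rw [G.d_mul _ _ h1, d_inv]
  have ce : G.c (G.mul t (G.inv t)) = G.c t := G.c_mul _ _ h1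
  have df : G.d (G.mul (G.inv s) s) = G.d s := by rw [G.d_mul _ _ h4]
  have cf : G.c (G.mul (G.inv s) s) = G.d s := by rw [G.c_mul _ _ h4, c_inv]
  have C0 : G.d (G.mul t (G.inv t)) = G.c (G.inv s) := by
    rw [de, c_inv]; exact h'.symm
  rw [G.assoc s t (G.mul (G.inv t) (G.inv s)) h' (by rw [G.c_mul _ _ h2, c_inv])]
  rw [← G.assoc t (G.inv t) (G.inv s) h1 h2]
  rw [G.assoc s (G.mul (G.mul t (G.inv t)) (G.inv s)) (G.mul s t)
    (by rw [G.c_mul _ _ C0, ce]; exact h')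
    (by rw [G.d_mul _ _ C0, d_inv, cst])]
  rw [← G.assoc (G.mul (G.mul t (G.inv t)) (G.inv s)) s t
    (by rw [G.d_mul _ _ C0, d_inv]) h']
  rw [G.assoc (G.mul t (G.inv t)) (G.inv s) s C0 h4]
  rw [idem_comm (idem_mul_inv G t) (idem_inv_mul G s) (by rw [de, df]; exact h'.symm)]
  rw [G.assoc (G.mul (G.inv s) s) (G.mul t (G.inv t)) t
    (by rw [df, ce]; exact h') (by rw [de])]
  rw [G.mul_inv_mul t]
  rw [← G.assoc s (G.mul (G.inv s) s) t (by rw [cf]) (by rw [df]; exact h')]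
  rw [← G.assoc s (G.inv s) s h3 h4]
  rw [G.mul_inv_mul s]

lemma inv_mul {s t : S} (h : G.Composable s t) :
    G.inv (G.mul s t) = G.mul (G.inv t) (G.inv s) := by
  have h' : G.d s = G.c t := h
  have h2 : G.d (G.inv t) = G.c (G.inv s) := by rw [d_inv, c_inv]; exact h'.symm
  refine (G.inv_unique (G.mul s t) (G.mul (G.inv t) (G.inv s)) ?_ ?_ ?_ ?_).symm
  · rw [G.d_mul _ _ h', G.c_mul _ _ h2, c_inv]
  · rw [G.d_mul _ _ h2, d_inv, G.c_mul _ _ h']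
  · exact sandwich G h
  · have := sandwich G (s := G.inv t) (t := G.inv s) h2
    rwa [inv_inv, inv_inv] at this

lemma tt_inv_le {s t : S} (h : G.Composable s t) :
    G.le (G.mul (G.mul t (G.inv t)) (G.inv s)) (G.inv s) := by
  have h' : G.d s = G.c t := h
  have h1 : G.d t = G.c (G.inv t) := G.comp_inv t
  have h4 : G.d (G.inv s) = G.c s := G.inv_comp s
  have de : G.d (G.mul t (G.inv t)) = G.c t := by rw [G.d_mul _ _ h1, d_inv]
  have ce : G.c (G.mul t (G.inv t)) = G.c t := G.c_mul _ _ h1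
  have Ce : G.d (G.mul t (G.inv t)) = G.c (G.inv s) := by
    rw [de, c_inv]; exact h'.symm
  have hinva : G.inv (G.mul (G.mul t (G.inv t)) (G.inv s))
      = G.mul s (G.mul t (G.inv t)) := by
    rw [inv_mul G Ce, inv_inv, idem_inv G (idem_mul_inv G t)]
  refine ⟨G.d_mul _ _ Ce, ?_, ?_⟩
  · rw [G.c_mul _ _ Ce, ce, c_inv]; exact h'.symm
  · rw [hinva]
    symm
    rw [← G.assoc (G.mul s (G.mul t (G.inv t))) (G.mul t (G.inv t)) (G.inv s)
      (by rw [G.d_mul s (G.mul t (G.inv t)) (by rw [ce]; exact h'), de, ce]) Ce]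
    rw [G.assoc s (G.mul t (G.inv t)) (G.mul t (G.inv t))
      (by rw [ce]; exact h') (by rw [de, ce])]
    rw [(idem_mul_inv G t).2]
    rw [G.assoc s (G.mul t (G.inv t)) (G.inv s) (by rw [ce]; exact h') Ce]
    rw [← G.assoc (G.inv s) s (G.mul (G.mul t (G.inv t)) (G.inv s)) h4
      (by rw [G.c_mul _ _ Ce, ce]; exact h')]
    rw [← G.assoc (G.mul (G.inv s) s) (G.mul t (G.inv t)) (G.inv s)
      (by rw [G.d_mul _ _ h4, ce]; exact h') Ce]
    rw [idem_comm (idem_inv_mul G s) (idem_mul_inv G t)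
      (by rw [G.d_mul _ _ h4, de]; exact h')]
    rw [G.assoc (G.mul t (G.inv t)) (G.mul (G.inv s) s) (G.inv s)
      (by rw [de, G.c_mul _ _ h4, c_inv]; exact h'.symm)
      (by rw [G.d_mul _ _ h4, c_inv])]
    rw [G.inv_mul_inv s]

end InvSgpdAux


open InvSgpdAux in
/-- Characterization of partial actions: given a family of subsets `dom s ⊆ X`
and maps `act s` carrying `dom (s*)` into `dom s`, the axioms (P1)–(P3) hold
if and only if (E1)–(E3) hold. -/
theorem paction_iff {S O X : Type*} (G : InvSgpd S O)
    (dom : S → Set X) (act : S → X → X)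
    (hmaps : ∀ s, ∀ x ∈ dom (G.inv s), act s x ∈ dom s) :
    -- (P1) ∧ (P2) ∧ (P3)
    (((∀ e, G.Idem e → ∀ x ∈ dom e, act e x = x) ∧
        (∀ x : X, ∃ e, G.Idem e ∧ x ∈ dom e)) ∧
      (∀ s, dom s ⊆ dom (G.mul s (G.inv s))) ∧
      (∀ s t, G.Composable s t →
        ({x | x ∈ dom (G.inv t) ∧ act t x ∈ dom t ∩ dom (G.inv s)}
            = dom (G.inv (G.mul s t)) ∩ dom (G.inv t)) ∧
          ∀ x ∈ dom (G.inv (G.mul s t)) ∩ dom (G.inv t),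
            act s (act t x) = act (G.mul s t) x))
    ↔
    -- (E1) ∧ (E2) ∧ (E3)
    (((∀ s, Set.BijOn (act s) (dom (G.inv s)) (dom s) ∧
          (∀ x ∈ dom (G.inv s), act (G.inv s) (act s x) = x) ∧
          (∀ y ∈ dom s, act s (act (G.inv s) y) = y)) ∧
        (∀ x : X, ∃ s, x ∈ dom s)) ∧
      (∀ s t, G.Composable s t →
        ∀ x, x ∈ dom (G.inv t) → act t x ∈ dom t ∩ dom (G.inv s) →
          x ∈ dom (G.inv (G.mul s t)) ∧ act (G.mul s t) x = act s (act t x)) ∧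
      (∀ s t, G.le s t → dom s ⊆ dom t)) := by
  constructor
  · rintro ⟨⟨hid, hcov⟩, hP2, hP3⟩
    have hsub : ∀ s, dom (G.inv s) ⊆ dom (G.mul (G.inv s) s) := by
      intro s
      have := hP2 (G.inv s)
      rwa [inv_inv] at this
    have hleft : ∀ s, ∀ x ∈ dom (G.inv s), act (G.inv s) (act s x) = x := by
      intro s x hx
      have comp : G.Composable (G.inv s) s := G.inv_comp s
      have hidem := idem_inv_mul G s
      have hx2 : x ∈ dom (G.inv (G.mul (G.inv s) s)) ∩ dom (G.inv s) := by
        rw [idem_inv G hidem]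
        exact ⟨hsub s hx, hx⟩
      rw [(hP3 (G.inv s) s comp).2 x hx2, hid _ hidem x (hsub s hx)]
    have hright : ∀ s, ∀ y ∈ dom s, act s (act (G.inv s) y) = y := by
      intro s y hy
      have := hleft (G.inv s) y (by rwa [inv_inv])
      rwa [inv_inv] at this
    refine ⟨⟨fun s => ⟨⟨fun x hx => hmaps s x hx, ?_, ?_⟩, hleft s, hright s⟩,
        fun x => (hcov x).elim fun e he => ⟨e, he.2⟩⟩, ?_, ?_⟩
    · intro x hx y hy hxy
      rw [← hleft s x hx, ← hleft s y hy, hxy]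
    · intro y hy
      exact ⟨act (G.inv s) y, hmaps (G.inv s) y (by rwa [inv_inv]), hright s y hy⟩
    · intro s t h x hx hmem
      have hL : x ∈ dom (G.inv (G.mul s t)) ∩ dom (G.inv t) := by
        rw [← (hP3 s t h).1]; exact ⟨hx, hmem⟩
      exact ⟨hL.1, ((hP3 s t h).2 x hL).symm⟩
    · rintro a b ⟨hd, hc, hs⟩
      have hidem := idem_inv_mul G a
      have comp_te : G.Composable b (G.mul (G.inv a) a) := by
        show G.d b = G.c (G.mul (G.inv a) a)
        rw [G.c_mul _ _ (G.inv_comp a), c_inv]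
        exact hd.symm
      obtain ⟨hset, hact⟩ := hP3 b (G.mul (G.inv a) a) comp_te
      rw [← hs, idem_inv G hidem] at hset hact
      intro y hy
      have hyx : act (G.inv a) y ∈ dom (G.inv a) :=
        hmaps (G.inv a) y (by rwa [inv_inv])
      have hx2 : act (G.inv a) y ∈ dom (G.inv a) ∩ dom (G.mul (G.inv a) a) :=
        ⟨hyx, hsub a hyx⟩
      rw [← hset] at hx2
      have hfix : act (G.mul (G.inv a) a) (act (G.inv a) y) = act (G.inv a) y :=
        hid _ hidem _ hx2.1
      have hxb : act (G.inv a) y ∈ dom (G.inv b) := by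
        have := hx2.2.2; rwa [hfix] at this
      have heq : act b (act (G.inv a) y) = act a (act (G.inv a) y) := by
        have := hact (act (G.inv a) y) ⟨hyx, hx2.1⟩
        rwa [hfix] at this
      have hy2 : act a (act (G.inv a) y) = y := hright a y hy
      rw [← hy2, ← heq]
      exact hmaps b _ hxb
  · rintro ⟨⟨hbij, hcov⟩, hE2, hE3⟩
    have hP2 : ∀ s, dom s ⊆ dom (G.mul s (G.inv s)) := by
      intro s x hx
      have hx' : x ∈ dom (G.inv (G.inv s)) := by rwa [inv_inv]
      have h1 := hE2 s (G.inv s) (G.comp_inv s) x hx'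
        ⟨hmaps (G.inv s) x hx', hmaps (G.inv s) x hx'⟩
      have := h1.1
      rwa [idem_inv G (idem_mul_inv G s)] at this
    have hP1 : ∀ e, G.Idem e → ∀ x ∈ dom e, act e x = x := by
      intro e he x hx
      have hx' : x ∈ dom (G.inv e) := by rwa [idem_inv G he]
      have hm : act e x ∈ dom e := hmaps e x hx'
      have hm' : act e x ∈ dom (G.inv e) := by rwa [idem_inv G he]
      have h1 := hE2 e e he.1 x hx' ⟨hm, hm'⟩
      have heq : act e x = act e (act e x) := by
        have := h1.2; rwa [he.2] at this
      exact ((hbij e).1.2.1 hx' hm' heq).symm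
    refine ⟨⟨hP1, fun x => (hcov x).elim fun s hs =>
        ⟨G.mul s (G.inv s), idem_mul_inv G s, hP2 s hs⟩⟩, hP2, ?_⟩
    intro s t h
    have h' : G.d s = G.c t := h
    have hTT := idem_mul_inv G t
    have hsupset : ∀ x ∈ dom (G.inv (G.mul s t)) ∩ dom (G.inv t),
        x ∈ dom (G.inv t) ∧ act t x ∈ dom t ∩ dom (G.inv s) := by
      rintro x ⟨hx1, hx2⟩
      have hy : act t x ∈ dom t := hmaps t x hx2
      have hyt : act (G.inv t) (act t x) = x := (hbij t).2.1 x hx2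
      have hy' : act t x ∈ dom (G.inv (G.inv t)) := by rwa [inv_inv]
      have h2 := hE2 (G.mul s t) (G.inv t)
        (show G.d (G.mul s t) = G.c (G.inv t) by rw [G.d_mul _ _ h', c_inv])
        (act t x) hy' (by rw [hyt]; exact ⟨hx2, hx1⟩)
      have hmem := h2.1
      rw [G.assoc s t (G.inv t) h' (G.comp_inv t),
        inv_mul G (show G.d s = G.c (G.mul t (G.inv t)) by
          rw [G.c_mul _ _ (G.comp_inv t)]; exact h'),
        idem_inv G hTT] at hmem
      exact ⟨hx2, hy, hE3 _ _ (tt_inv_le G h) hmem⟩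
    constructor
    · ext x
      constructor
      · rintro ⟨hx1, hx2⟩
        exact ⟨(hE2 s t h x hx1 hx2).1, hx1⟩
      · intro hx
        exact hsupset x hx
    · intro x hx
      have h3 := hsupset x hx
      exact ((hE2 s t h x h3.1 h3.2).2).symm
end

section
/- Let θ be a global action of an inverse semigroupoid S on a set Y and X ⊆ Y. Define X_s = θ_s(X ∩ Y_{s*}) ∩ X and let (θ|_X)_s be the restriction of θ_s to X_{s*} → X_s. Then θ|_X = ({X_s},{(θ|_X)_s}) is a partial action of S on X. -/
namespace RestrictionHelpers

variable {S O Y : Type*}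

theorem inv_inv (G : InvSgpd S O) (s : S) : G.inv (G.inv s) = s :=
  (G.inv_unique (G.inv s) s (G.inv_comp s) (G.comp_inv s)
    (G.inv_mul_inv s) (G.mul_inv_mul s)).symm

theorem inv_idem (G : InvSgpd S O) (e : S) (he : G.Idem e) : G.inv e = e :=
  (G.inv_unique e e he.1 he.1 (by rw [he.2, he.2]) (by rw [he.2, he.2])).symm

theorem idem_inv_mul (G : InvSgpd S O) (s : S) : G.Idem (G.mul (G.inv s) s) := by
  refine ⟨?_, ?_⟩
  · show G.d _ = G.c _
    rw [G.d_mul _ _ (G.inv_comp s), G.c_mul _ _ (G.inv_comp s), ← G.comp_inv s]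
  · have hc : G.d s = G.c (G.mul (G.inv s) s) := by
      rw [G.c_mul _ _ (G.inv_comp s), ← G.comp_inv s]
    have h1 : G.mul (G.mul (G.inv s) s) (G.mul (G.inv s) s)
        = G.mul (G.inv s) (G.mul s (G.mul (G.inv s) s)) :=
      G.assoc (G.inv s) s (G.mul (G.inv s) s) (G.inv_comp s) hc
    have h2 : G.mul s (G.mul (G.inv s) s) = s := by
      rw [← G.assoc s (G.inv s) s (G.comp_inv s) (G.inv_comp s), G.mul_inv_mul]
    rw [h1, h2]

theorem idem_mul_inv (G : InvSgpd S O) (s : S) : G.Idem (G.mul s (G.inv s)) := by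
  have h := idem_inv_mul G (G.inv s)
  rwa [inv_inv] at h

theorem act_inv_act (G : InvSgpd S O) (θ : PAction G Y) (hθ : θ.IsGlobal)
    (s : S) {x : Y} (hx : x ∈ θ.dom (G.inv s)) :
    θ.act (G.inv s) (θ.act s x) = x := by
  have hdom : x ∈ θ.dom (G.mul (G.inv s) s) := by
    have h := hθ (G.inv s)
    rw [inv_inv] at h
    rwa [← h]
  have he := idem_inv_mul G s
  have hie : G.inv (G.mul (G.inv s) s) = G.mul (G.inv s) s := inv_idem G _ he
  have h := θ.mul_act (G.inv s) s (G.inv_comp s) x ⟨by rw [hie]; exact hdom, hx⟩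
  rw [h, θ.idem_id _ he x hdom]

theorem act_act_inv (G : InvSgpd S O) (θ : PAction G Y) (hθ : θ.IsGlobal)
    (s : S) {x : Y} (hx : x ∈ θ.dom s) :
    θ.act s (θ.act (G.inv s) x) = x := by
  have h := act_inv_act G θ hθ (G.inv s) (x := x) (by rw [inv_inv]; exact hx)
  rwa [inv_inv] at h

theorem maps_inv (G : InvSgpd S O) (θ : PAction G Y)
    (s : S) {x : Y} (hx : x ∈ θ.dom s) :
    θ.act (G.inv s) x ∈ θ.dom (G.inv s) :=
  θ.maps (G.inv s) x (by rw [inv_inv]; exact hx)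

theorem mem_im (G : InvSgpd S O) (θ : PAction G Y) (hθ : θ.IsGlobal)
    (Xset : Set Y) (s : S) (x : Y) :
    x ∈ θ.act s '' {y | y ∈ Xset ∧ y ∈ θ.dom (G.inv s)}
      ↔ x ∈ θ.dom s ∧ θ.act (G.inv s) x ∈ Xset := by
  constructor
  · rintro ⟨y, ⟨hyX, hyd⟩, rfl⟩
    exact ⟨θ.maps s y hyd, by rw [act_inv_act G θ hθ s hyd]; exact hyX⟩
  · rintro ⟨hxd, hxX⟩
    exact ⟨θ.act (G.inv s) x, ⟨hxX, maps_inv G θ s hxd⟩, act_act_inv G θ hθ s hxd⟩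

end RestrictionHelpers

open RestrictionHelpers in
open scoped Classical in
/-- Restricting a global action `θ` of `G` on `Y` to a subset `X ⊆ Y`, via
`X_s := θ_s(X ∩ Y_{s*}) ∩ X`, yields a partial action of `G` on `X`. -/
theorem restriction_is_paction {S O Y : Type*} (G : InvSgpd S O)
    (θ : PAction G Y) (hθ : θ.IsGlobal) (Xset : Set Y) :
    ∃ P : PAction G Xset,
      (∀ s, P.dom s =
        {x : Xset | (x : Y) ∈ θ.act s '' {y | y ∈ Xset ∧ y ∈ θ.dom (G.inv s)}}) ∧
      (∀ s (x : Xset),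
        P.act s x =
          if h : (x : Y) ∈ θ.dom (G.inv s) ∧ θ.act s (x : Y) ∈ Xset
          then (⟨θ.act s (x : Y), h.2⟩ : Xset) else x) := by
  classical
  set D : S → Set Xset := fun s =>
    {x : Xset | (x : Y) ∈ θ.act s '' {y | y ∈ Xset ∧ y ∈ θ.dom (G.inv s)}} with hD
  set A : S → Xset → Xset := fun s x =>
    if h : (x : Y) ∈ θ.dom (G.inv s) ∧ θ.act s (x : Y) ∈ Xset
    then (⟨θ.act s (x : Y), h.2⟩ : Xset) else x with hA
  have memD : ∀ (s : S) (x : Xset),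
      x ∈ D s ↔ (x : Y) ∈ θ.dom s ∧ θ.act (G.inv s) (x : Y) ∈ Xset := by
    intro s x
    exact mem_im G θ hθ Xset s (x : Y)
  -- description of A on points of D (inv s)
  have hAval : ∀ (s : S) (x : Xset), x ∈ D (G.inv s) →
      (h : (x : Y) ∈ θ.dom (G.inv s) ∧ θ.act s (x : Y) ∈ Xset) →
      A s x = ⟨θ.act s (x : Y), h.2⟩ := by
    intro s x _ h
    simp only [hA, dif_pos h]
  have memD_inv : ∀ (s : S) (x : Xset),
      x ∈ D (G.inv s) ↔ (x : Y) ∈ θ.dom (G.inv s) ∧ θ.act s (x : Y) ∈ Xset := by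
    intro s x
    rw [memD, inv_inv]
  refine ⟨⟨D, A, ?_, ?_, ?_, ?_, ?_, ?_⟩, fun s => rfl, fun s x => rfl⟩
  · -- maps
    intro s x hx
    obtain ⟨h1, h2⟩ := (memD_inv s x).mp hx
    rw [hAval s x hx ⟨h1, h2⟩, memD]
    refine ⟨θ.maps s x h1, ?_⟩
    rw [act_inv_act G θ hθ s h1]
    exact x.2
  · -- idem_id
    intro e he x hx
    obtain ⟨h1, h2⟩ := (memD e x).mp hx
    have hact : θ.act e (x : Y) = x := θ.idem_id e he x h1
    have hcond : (x : Y) ∈ θ.dom (G.inv e) ∧ θ.act e (x : Y) ∈ Xset := by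
      rw [inv_idem G e he, hact]
      exact ⟨h1, x.2⟩
    simp only [hA, dif_pos hcond]
    exact Subtype.ext hact
  · -- cover
    intro x
    obtain ⟨e, he, hxe⟩ := θ.cover (x : Y)
    refine ⟨e, he, (memD e x).mpr ⟨hxe, ?_⟩⟩
    rw [inv_idem G e he, θ.idem_id e he x hxe]
    exact x.2
  · -- dom_mono
    intro s x hx
    obtain ⟨h1, _⟩ := (memD s x).mp hx
    have he := idem_mul_inv G s
    have hxe : (x : Y) ∈ θ.dom (G.mul s (G.inv s)) := by
      rw [← hθ s]; exact h1
    rw [memD]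
    refine ⟨hxe, ?_⟩
    rw [inv_idem G _ he, θ.idem_id _ he x hxe]
    exact x.2
  · -- preimage_eq
    intro s t hst
    have hYpre := θ.preimage_eq s t hst
    ext x
    simp only [Set.mem_setOf_eq, Set.mem_inter_iff]
    constructor
    · rintro ⟨hxt, hAt, hAs⟩
      obtain ⟨h1, h2⟩ := (memD_inv t x).mp hxt
      have hAeq : A t x = ⟨θ.act t (x : Y), h2⟩ := by
        simp only [hA]; rw [dif_pos ⟨h1, h2⟩]
      rw [hAeq] at hAs
      obtain ⟨h3, h4⟩ := (memD_inv s _).mp hAs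
      have hmem : (x : Y) ∈ θ.dom (G.inv (G.mul s t)) ∩ θ.dom (G.inv t) :=
        (Set.ext_iff.mp hYpre (x : Y)).mp ⟨h1, θ.maps t x h1, h3⟩
      have hmul := θ.mul_act s t hst (x : Y) hmem
      refine ⟨(memD_inv (G.mul s t) x).mpr ⟨hmem.1, ?_⟩, hxt⟩
      rw [← hmul]; exact h4
    · rintro ⟨hx1, hx2⟩
      obtain ⟨h5, h6⟩ := (memD_inv (G.mul s t) x).mp hx1
      obtain ⟨h1, h2⟩ := (memD_inv t x).mp hx2
      have hmem := (Set.ext_iff.mp hYpre (x : Y)).mpr ⟨h5, h1⟩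
      have h3 : θ.act t (x : Y) ∈ θ.dom (G.inv s) := hmem.2.2
      have hmul := θ.mul_act s t hst (x : Y) ⟨h5, h1⟩
      have h4 : θ.act s (θ.act t (x : Y)) ∈ Xset := by rw [hmul]; exact h6
      have hAeq : A t x = ⟨θ.act t (x : Y), h2⟩ := by
        simp only [hA]; rw [dif_pos ⟨h1, h2⟩]
      refine ⟨hx2, ?_, ?_⟩
      · rw [hAeq, memD]
        exact ⟨θ.maps t x h1, by rw [act_inv_act G θ hθ t h1]; exact x.2⟩
      · rw [hAeq]
        exact (memD_inv s _).mpr ⟨h3, h4⟩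
  · -- mul_act
    intro s t hst x hx
    have hYpre := θ.preimage_eq s t hst
    obtain ⟨h5, h6⟩ := (memD_inv (G.mul s t) x).mp hx.1
    obtain ⟨h1, h2⟩ := (memD_inv t x).mp hx.2
    have hmem := (Set.ext_iff.mp hYpre (x : Y)).mpr ⟨h5, h1⟩
    have h3 : θ.act t (x : Y) ∈ θ.dom (G.inv s) := hmem.2.2
    have hmul := θ.mul_act s t hst (x : Y) ⟨h5, h1⟩
    have h4 : θ.act s (θ.act t (x : Y)) ∈ Xset := by rw [hmul]; exact h6
    have hAt : A t x = ⟨θ.act t (x : Y), h2⟩ := by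
      simp only [hA]; rw [dif_pos ⟨h1, h2⟩]
    have hAst : A (G.mul s t) x = ⟨θ.act (G.mul s t) (x : Y), h6⟩ := by
      simp only [hA]; rw [dif_pos ⟨h5, h6⟩]
    rw [hAt, hAst]
    have : A s ⟨θ.act t (x : Y), h2⟩ = ⟨θ.act s (θ.act t (x : Y)), h4⟩ := by
      simp only [hA]; rw [dif_pos ⟨h3, h4⟩]
    rw [this]
    exact Subtype.ext hmul
end
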